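/- Let v be a non-empty palindromic prefix of a standard Sturmian sequence obtained by iterated palindromic closure (v = w_n where w_0 = ε and w_{k+1} = (w_k δ_{k+1})^R for letters δ_k ∈ {0,1}). For each letter a occurring in v, let r_a be the maximal length of a palindromic prefix p of v such that pa is a prefix of v. Then Γ = {r_a : a occurs in v} is a string attractor of v, and it is of minimum size (its size equals the number of distinct letters of v). -/

import Mathlib

def occursAt (f w : List Bool) (i : ℕ) : Prop :=
  i + f.length ≤ w.length ∧ (w.drop i).take f.length = f

def IsAttractor (w : List Bool) (Γ : Finset ℕ) : Prop :=
  (∀ γ ∈ Γ, γ < w.length) ∧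
  ∀ f : List Bool, f ≠ [] → f <:+: w →
    ∃ i, occursAt f w i ∧ ∃ γ ∈ Γ, i ≤ γ ∧ γ < i + f.length

def Emap (w : List Bool) : List Bool := (w.reverse).map (fun b => !b)

def IsPal (w : List Bool) : Prop := w.reverse = w

def IsAntipal (w : List Bool) : Prop := Emap w = w

def IsPalClosure (w p : List Bool) : Prop :=
  IsPal p ∧ w <+: p ∧ ∀ q, IsPal q → w <+: q → p.length ≤ q.length

def IsAntipalClosure (w p : List Bool) : Prop :=
  IsAntipal p ∧ w <+: p ∧ ∀ q, IsAntipal q → w <+: q → p.length ≤ q.length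

section AuxSA

variable {δ : ℕ → Bool} {w : ℕ → List Bool}

def MaxPalSA (v : List Bool) (a : Bool) (ρ : ℕ) : Prop :=
  (∃ p, IsPal p ∧ (p ++ [a]) <+: v ∧ p.length = ρ) ∧
  (∀ p, IsPal p → (p ++ [a]) <+: v → p.length ≤ ρ)

lemma maxPalSA_unique {v : List Bool} {a : Bool} {ρ₁ ρ₂ : ℕ}
    (h1 : MaxPalSA v a ρ₁) (h2 : MaxPalSA v a ρ₂) : ρ₁ = ρ₂ := by
  obtain ⟨⟨p1, hp1, hpre1, hl1⟩, hmax1⟩ := h1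
  obtain ⟨⟨p2, hp2, hpre2, hl2⟩, hmax2⟩ := h2
  have := hmax2 p1 hp1 hpre1
  have := hmax1 p2 hp2 hpre2
  omega

lemma maxPalSA_lt {v : List Bool} {a : Bool} {ρ : ℕ} (h : MaxPalSA v a ρ) : ρ < v.length := by
  obtain ⟨⟨p, _, hpre, hl⟩, _⟩ := h
  have := hpre.length_le
  simp at this
  omega

lemma occ_of_infix {f W : List Bool} (h : f <:+: W) : ∃ i, occursAt f W i := by
  obtain ⟨s, t, rfl⟩ := h
  refine ⟨s.length, by simp, ?_⟩
  rw [List.append_assoc, List.drop_left, List.take_left]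

lemma infix_of_occ {f W : List Bool} {i : ℕ} (h : occursAt f W i) : f <:+: W := by
  obtain ⟨h1, h2⟩ := h
  refine ⟨W.take i, W.drop (i + f.length), ?_⟩
  conv_rhs => rw [← List.take_append_drop i W]
  rw [List.append_assoc]
  congr 1
  conv_rhs => rw [← List.take_append_drop f.length (W.drop i)]
  rw [h2, List.drop_drop]

lemma occ_prefix {f u t : List Bool} {i : ℕ} (h : occursAt f u i) :
    occursAt f (u ++ t) i := by
  obtain ⟨h1, h2⟩ := h
  constructor
  · simp; omega
  · rw [List.drop_append, List.take_append]
    have e1 : i - u.length = 0 := by omega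
    have e2 : f.length - (u.length - i) = 0 := by omega
    simp [e1, e2, List.length_drop, h2]

lemma occ_unprefix {f u t : List Bool} {i : ℕ} (h : occursAt f (u ++ t) i)
    (hle : i + f.length ≤ u.length) : occursAt f u i := by
  obtain ⟨h1, h2⟩ := h
  refine ⟨hle, ?_⟩
  rw [List.drop_append, List.take_append] at h2
  have e1 : i - u.length = 0 := by omega
  simp only [List.length_drop, e1, List.drop_zero] at h2
  rw [show f.length - (u.length - i) = 0 from by omega, List.take_zero, List.append_nil] at h2
  exact h2

lemma occ_suffix {f u y : List Bool} {i : ℕ} (h : occursAt f u i) :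
    occursAt f (y ++ u) (y.length + i) := by
  obtain ⟨h1, h2⟩ := h
  constructor
  · simp; omega
  · rw [List.drop_append]
    have e1 : y.drop (y.length + i) = [] := by
      apply List.drop_eq_nil_of_le; omega
    have e2 : y.length + i - y.length = i := by omega
    simp [e1, e2, h2]

lemma occ_unsuffix {f u y : List Bool} {i : ℕ} (h : occursAt f (y ++ u) i)
    (hge : y.length ≤ i) : occursAt f u (i - y.length) := by
  obtain ⟨h1, h2⟩ := h
  constructor
  · simp at h1; omega
  · rw [List.drop_append] at h2
    have e1 : y.drop i = [] := by apply List.drop_eq_nil_of_le; omega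
    simpa [e1] using h2

lemma snoc_pfx_eq {u p₁ p₂ : List Bool} {a b : Bool}
    (h1 : (p₁ ++ [a]) <+: u) (h2 : (p₂ ++ [b]) <+: u) (hl : p₁.length = p₂.length) :
    a = b := by
  have hpp := List.prefix_of_prefix_length_le h1 h2 (by simp [hl])
  have heq := hpp.eq_of_length (by simp [hl])
  have := List.append_inj_right heq (by omega)
  simpa using this


lemma w_pal (h0 : w 0 = []) (hclos : ∀ k, IsPalClosure (w k ++ [δ (k + 1)]) (w (k + 1)))
    (n : ℕ) : IsPal (w n) := by
  cases n with
  | zero => rw [h0]; rfl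
  | succ k => exact (hclos k).1

lemma w_len_succ (hclos : ∀ k, IsPalClosure (w k ++ [δ (k + 1)]) (w (k + 1))) (n : ℕ) :
    (w n).length < (w (n + 1)).length := by
  have := (hclos n).2.1.length_le
  simp at this
  omega

lemma w_pfx (hclos : ∀ k, IsPalClosure (w k ++ [δ (k + 1)]) (w (k + 1))) {m n : ℕ}
    (h : m ≤ n) : w m <+: w n := by
  induction n, h using Nat.le_induction with
  | base => exact List.prefix_rfl
  | succ n hmn ih => exact ih.trans ((List.prefix_append _ _).trans (hclos n).2.1)

lemma w_len_mono (hclos : ∀ k, IsPalClosure (w k ++ [δ (k + 1)]) (w (k + 1))) {m n : ℕ}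
    (h : m ≤ n) : (w m).length ≤ (w n).length := (w_pfx hclos h).length_le

lemma pal_pfx_classify (h0 : w 0 = [])
    (hclos : ∀ k, IsPalClosure (w k ++ [δ (k + 1)]) (w (k + 1))) (n : ℕ) {p : List Bool}
    (hp : IsPal p) (hpre : p <+: w n) : ∃ k, k ≤ n ∧ p = w k := by
  induction n with
  | zero => exact ⟨0, le_rfl, by simpa [h0] using hpre⟩
  | succ n ih =>
    by_cases hle : p.length ≤ (w n).length
    · obtain ⟨k, hk, rfl⟩ := ih (List.prefix_of_prefix_length_le hpre
        (w_pfx hclos (Nat.le_succ n)) hle)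
      exact ⟨k, by omega, rfl⟩
    · have h1 : w n ++ [δ (n + 1)] <+: p :=
        List.prefix_of_prefix_length_le (hclos n).2.1 hpre (by simp; omega)
      have h2 := (hclos n).2.2 p hp h1
      have h3 := hpre.length_le
      exact ⟨n + 1, le_rfl, hpre.eq_of_length (by omega)⟩


lemma maxpal_exists {u : List Bool} {a : Bool} (hu : IsPal u) (ha : a ∈ u) :
    ∃ ρ, MaxPalSA u a ρ := by
  classical
  have hex : ∃ m, m ≤ u.length ∧ IsPal (u.take m) ∧ (u.take m ++ [a]) <+: u := by
    set tw := u.takeWhile (fun b => b != a) with htw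
    have h1 : tw <+: u := List.takeWhile_prefix _
    have hmemtw : ∀ b ∈ tw, b = !a := by
      intro b hb
      have := List.mem_takeWhile_imp hb
      simp at this
      cases a <;> cases b <;> simp_all
    have hdw : u.dropWhile (fun b => b != a) ≠ [] := by
      intro hnil
      have hu' : u = tw := by
        conv_lhs => rw [← List.takeWhile_append_dropWhile (p := fun b => b != a) (l := u)]
        rw [hnil, List.append_nil]
      have := hmemtw a (hu' ▸ ha)
      simp at this
    obtain ⟨c, rest, hcr⟩ := List.exists_cons_of_ne_nil hdw
    have hca : c = a := by
      have := List.head?_dropWhile_not (fun b => b != a) u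
      rw [hcr] at this
      simpa using this
    have hsplit : u = tw ++ [a] ++ rest := by
      conv_lhs => rw [← List.takeWhile_append_dropWhile (p := fun b => b != a) (l := u)]
      rw [hcr, hca]
      simp
      exact htw.symm
    have htake : u.take tw.length = tw := (List.prefix_iff_eq_take.mp h1).symm
    refine ⟨tw.length, h1.length_le, ?_, ?_⟩
    · rw [htake]
      have : tw = List.replicate tw.length (!a) :=
        List.eq_replicate_iff.mpr ⟨rfl, hmemtw⟩
      rw [this]
      unfold IsPal
      simp [List.reverse_replicate]
    · rw [htake]
      exact ⟨rest, by rw [← hsplit]⟩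
  set P : ℕ → Prop := fun m => IsPal (u.take m) ∧ (u.take m ++ [a]) <+: u with hP
  obtain ⟨m, hm1, hm2, hm3⟩ := hex
  have hρle : Nat.findGreatest P u.length ≤ u.length := Nat.findGreatest_le _
  have hspec : P (Nat.findGreatest P u.length) := Nat.findGreatest_spec hm1 ⟨hm2, hm3⟩
  refine ⟨Nat.findGreatest P u.length, ⟨u.take _, hspec.1, hspec.2, by simp [hρle]⟩, ?_⟩
  intro p hp hpre
  have hplen : p.length ≤ u.length := by
    have := hpre.length_le; simp at this; omega
  have hptake : p = u.take p.length := by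
    rw [← List.prefix_iff_eq_take.mp ((p.prefix_append [a]).trans hpre)]
  exact Nat.le_findGreatest hplen ⟨by rw [← hptake]; exact hp, by rw [← hptake]; exact hpre⟩


lemma key_step (h0 : w 0 = [])
    (hclos : ∀ k, IsPalClosure (w k ++ [δ (k + 1)]) (w (k + 1))) (n : ℕ) :
    ∃ (s : ℕ) (y : List Bool),
      (w (n + 1)).length = (w n).length + s ∧ y.length = s ∧ w (n + 1) = y ++ w n ∧ 1 ≤ s ∧
      ((δ (n + 1) ∉ w n ∧ s = (w n).length + 1) ∨
       (∃ ρ, MaxPalSA (w n) (δ (n + 1)) ρ ∧ s + ρ = (w n).length)) := by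
  have hWpal : IsPal (w (n + 1)) := (hclos n).1
  have hupal : IsPal (w n) := w_pal h0 hclos n
  obtain ⟨t₂, ht₂⟩ := (hclos n).2.1
  have hlen : (w (n + 1)).length = (w n).length + (t₂.length + 1) := by
    have := congrArg List.length ht₂
    simp at this
    omega
  have hsuf : w (n + 1) = ([δ (n + 1)] ++ t₂).reverse ++ w n := by
    conv_lhs => rw [← hWpal, ← ht₂]
    rw [List.append_assoc, List.reverse_append, hupal]
  have hys : ([δ (n + 1)] ++ t₂).reverse.length = t₂.length + 1 := by simp
  refine ⟨t₂.length + 1, _, hlen, hys, hsuf, by omega, ?_⟩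
  have hover : t₂.length + 1 ≤ (w n).length →
      ((w n).drop (t₂.length + 1)) ++ [δ (n + 1)] <+: w n ∧ IsPal ((w n).drop (t₂.length + 1)) := by
    intro hsle
    have hdropW : (w (n + 1)).drop (t₂.length + 1) = w n := by
      conv_lhs => rw [hsuf, ← hys]
      exact List.drop_left
    have hdropW2 : (w (n + 1)).drop (t₂.length + 1) =
        (w n).drop (t₂.length + 1) ++ ([δ (n + 1)] ++ t₂) := by
      rw [← ht₂, List.append_assoc, List.drop_append]
      have e : t₂.length + 1 - (w n).length = 0 := by omega
      simp [e]
    have hkey : w n = (w n).drop (t₂.length + 1) ++ [δ (n + 1)] ++ t₂ := by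
      rw [List.append_assoc]
      exact hdropW.symm.trans hdropW2
    constructor
    · exact ⟨t₂, by rw [← hkey]⟩
    · have hpref : (w n).drop (t₂.length + 1) <+: w n :=
        ⟨[δ (n + 1)] ++ t₂, by rw [← List.append_assoc, ← hkey]⟩
      have htk : (w n).drop (t₂.length + 1) = (w n).take ((w n).length - (t₂.length + 1)) := by
        conv_lhs => rw [List.prefix_iff_eq_take.mp hpref]
        rw [List.length_drop]
      unfold IsPal
      rw [List.reverse_drop, hupal, ← htk]
  by_cases ha : δ (n + 1) ∈ w n
  · right
    obtain ⟨ρ, hρ⟩ := maxpal_exists hupal ha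
    refine ⟨ρ, hρ, ?_⟩
    obtain ⟨⟨p, hppal, hppre, hplen⟩, hmax⟩ := hρ
    obtain ⟨d, hd⟩ := hppre
    have hupd : w n = p ++ [δ (n + 1)] ++ d := hd.symm
    have hppal' : p.reverse = p := hppal
    have hrev : d.reverse ++ [δ (n + 1)] ++ p = w n := by
      have h1 : (p ++ [δ (n + 1)] ++ d).reverse = d.reverse ++ [δ (n + 1)] ++ p := by
        simp [List.reverse_append, hppal', List.append_assoc]
      rw [← hupd] at h1
      rw [← h1, hupal]
    have hqpal : IsPal (w n ++ [δ (n + 1)] ++ d) := by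
      unfold IsPal
      calc (w n ++ [δ (n + 1)] ++ d).reverse
          = d.reverse ++ [δ (n + 1)] ++ (w n).reverse := by
            simp [List.reverse_append, List.append_assoc]
        _ = d.reverse ++ [δ (n + 1)] ++ (p ++ [δ (n + 1)] ++ d) := by rw [hupal, ← hupd]
        _ = (d.reverse ++ [δ (n + 1)] ++ p) ++ ([δ (n + 1)] ++ d) := by
            simp [List.append_assoc]
        _ = w n ++ [δ (n + 1)] ++ d := by rw [hrev]; simp [List.append_assoc]
    have hupper := (hclos n).2.2 _ hqpal ⟨d, by rw [List.append_assoc]⟩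
    have hlq : (w n ++ [δ (n + 1)] ++ d).length = (w n).length + 1 + d.length := by
      simp; omega
    have hlu : (w n).length = ρ + 1 + d.length := by
      have := congrArg List.length hupd
      simp at this
      omega
    have hsle : t₂.length + 1 ≤ (w n).length := by omega
    obtain ⟨hpfx', hpal'⟩ := hover hsle
    have hlow := hmax _ hpal' hpfx'
    rw [List.length_drop] at hlow
    omega
  · left
    refine ⟨ha, ?_⟩
    have hqpal : IsPal (w n ++ [δ (n + 1)] ++ w n) := by
      unfold IsPal
      calc (w n ++ [δ (n + 1)] ++ w n).reverse
          = (w n).reverse ++ [δ (n + 1)] ++ (w n).reverse := by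
            simp [List.reverse_append, List.append_assoc]
        _ = w n ++ [δ (n + 1)] ++ w n := by rw [hupal]
    have hupper := (hclos n).2.2 _ hqpal ⟨w n, by rw [List.append_assoc]⟩
    have hlq : (w n ++ [δ (n + 1)] ++ w n).length = (w n).length + 1 + (w n).length := by
      simp; omega
    by_cases hs2 : t₂.length + 1 ≤ (w n).length
    · obtain ⟨hpfx', _⟩ := hover hs2
      exact absurd (hpfx'.subset (by simp)) ha
    · omega


lemma maxpal_top (h0 : w 0 = [])
    (hclos : ∀ k, IsPalClosure (w k ++ [δ (k + 1)]) (w (k + 1))) (n : ℕ) :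
    MaxPalSA (w (n + 1)) (δ (n + 1)) (w n).length := by
  constructor
  · exact ⟨w n, w_pal h0 hclos n, (hclos n).2.1, rfl⟩
  · intro p hp hpre
    obtain ⟨k, hk, rfl⟩ := pal_pfx_classify h0 hclos (n + 1) hp ((p.prefix_append _).trans hpre)
    rcases Nat.lt_succ_iff_lt_or_eq.mp (Nat.lt_succ_of_le hk) with h | h
    · exact w_len_mono hclos (by omega)
    · subst h
      have := hpre.length_le
      simp at this
  -- contradiction handled by simp producing False? check

lemma maxpal_lift (h0 : w 0 = [])
    (hclos : ∀ k, IsPalClosure (w k ++ [δ (k + 1)]) (w (k + 1))) (n : ℕ) {b : Bool} {ρ : ℕ}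
    (hb : b ≠ δ (n + 1)) (h : MaxPalSA (w n) b ρ) : MaxPalSA (w (n + 1)) b ρ := by
  obtain ⟨⟨p, hp, hpre, hl⟩, hmax⟩ := h
  have hu : w n <+: w (n + 1) := w_pfx hclos (Nat.le_succ n)
  refine ⟨⟨p, hp, hpre.trans hu, hl⟩, ?_⟩
  intro p' hp' hpre'
  obtain ⟨k, hk, rfl⟩ := pal_pfx_classify h0 hclos (n + 1) hp' ((p'.prefix_append _).trans hpre')
  rcases Nat.lt_succ_iff_lt_or_eq.mp (Nat.lt_succ_of_le hk) with hkn | hkn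
  · -- k ≤ n
    by_cases hlen : (w k).length = (w n).length
    · have hwk : w k = w n := (w_pfx hclos (by omega : k ≤ n)).eq_of_length hlen
      rw [hwk] at hpre'
      exact absurd (snoc_pfx_eq hpre' (hclos n).2.1 rfl) hb
    · have hlt : (w k).length < (w n).length :=
        lt_of_le_of_ne (w_len_mono hclos (by omega : k ≤ n)) hlen
      have : w k ++ [b] <+: w n :=
        List.prefix_of_prefix_length_le hpre' hu (by simp; omega)
      exact hmax _ hp' this
  · subst hkn
    have := hpre'.length_le
    simp at this

lemma main_ind (h0 : w 0 = [])
    (hclos : ∀ k, IsPalClosure (w k ++ [δ (k + 1)]) (w (k + 1))) (n : ℕ) :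
    ∀ f : List Bool, f ≠ [] → f <:+: w n →
      ∃ i a ρ, a ∈ w n ∧ MaxPalSA (w n) a ρ ∧ occursAt f (w n) i ∧ i ≤ ρ ∧ ρ < i + f.length := by
  induction n with
  | zero =>
    intro f hf hinf
    rw [h0] at hinf
    have := hinf.length_le
    simp at this
    exact absurd this hf
  | succ n ih =>
    intro f hf hinf
    obtain ⟨s, y, hWs, hys, hyW, hs1, hbr⟩ := key_step h0 hclos n
    obtain ⟨i, hi⟩ := occ_of_infix hinf
    have hamem : δ (n + 1) ∈ w (n + 1) := (hclos n).2.1.subset (by simp)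
    have hflen : 1 ≤ f.length := List.length_pos_iff.mpr hf
    by_cases hcross : i ≤ (w n).length ∧ (w n).length < i + f.length
    · exact ⟨i, δ (n + 1), (w n).length, hamem, maxpal_top h0 hclos n, hi, hcross.1, hcross.2⟩
    · have hsle : s ≤ (w n).length + 1 := by
        rcases hbr with ⟨_, h⟩ | ⟨ρ, hρ, h⟩
        · omega
        · omega
      have hocc_u : ∃ j, occursAt f (w n) j ∧ (i = j ∨ i = s + j) := by
        by_cases his : s ≤ i
        · refine ⟨i - s, ?_, Or.inr (by omega)⟩
          rw [hyW] at hi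
          have := occ_unsuffix hi (by omega)
          rwa [hys] at this  -- careful: occ gives (i - y.length); y.length = s
        · have hiu : i ≤ (w n).length := by omega
          have hif : i + f.length ≤ (w n).length := by
            rcases Nat.lt_or_ge ((w n).length) (i + f.length) with h | h
            · exact absurd ⟨hiu, h⟩ hcross
            · exact h
          obtain ⟨t, ht⟩ := w_pfx hclos (Nat.le_succ n)
          rw [← ht] at hi
          exact ⟨i, occ_unprefix hi hif, Or.inl rfl⟩
      obtain ⟨j, hj, hij⟩ := hocc_u
      obtain ⟨i', b, ρ', hbmem, hmax', hocc', hle', hlt'⟩ := ih f hf (infix_of_occ hj)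
      by_cases hba : b = δ (n + 1)
      · subst hba
        rcases hbr with ⟨hnotmem, _⟩ | ⟨ρ, hρ, hsum⟩
        · exact absurd hbmem hnotmem
        · have hρρ' : ρ' = ρ := maxPalSA_unique hmax' hρ
          refine ⟨y.length + i', δ (n + 1), (w n).length, hamem, maxpal_top h0 hclos n, ?_, ?_, ?_⟩
          · rw [hyW]
            exact occ_suffix hocc'
          · omega
          · omega
      · refine ⟨i', b, ρ', (w_pfx hclos (Nat.le_succ n)).subset hbmem,
          maxpal_lift h0 hclos n hba hmax', ?_, hle', hlt'⟩
        obtain ⟨t, ht⟩ := w_pfx hclos (Nat.le_succ n)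
        rw [← ht]
        exact occ_prefix hocc'




end AuxSA

theorem stmt_10 (δ : ℕ → Bool) (w : ℕ → List Bool) (n : ℕ)
    (h0 : w 0 = [])
    (hclos : ∀ k, IsPalClosure (w k ++ [δ (k + 1)]) (w (k + 1)))
    (v : List Bool) (hv : v = w n) (hne : v ≠ [])
    (r : Bool → ℕ)
    (hr : ∀ a ∈ v.toFinset,
      (∃ p, IsPal p ∧ (p ++ [a]) <+: v ∧ p.length = r a) ∧
      (∀ p, IsPal p → (p ++ [a]) <+: v → p.length ≤ r a)) :
    IsAttractor v (v.toFinset.image r) ∧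
    (v.toFinset.image r).card = v.toFinset.card ∧
    ∀ Γ : Finset ℕ, IsAttractor v Γ → (v.toFinset.image r).card ≤ Γ.card := by
  have hcard : (v.toFinset.image r).card = v.toFinset.card := by
    apply Finset.card_image_of_injOn
    intro b1 hb1 b2 hb2 hEq
    obtain ⟨⟨p1, hp1, hpre1, hl1⟩, _⟩ := hr b1 hb1
    obtain ⟨⟨p2, hp2, hpre2, hl2⟩, _⟩ := hr b2 hb2
    exact snoc_pfx_eq hpre1 hpre2 (by omega)
  refine ⟨⟨?_, ?_⟩, hcard, ?_⟩
  · intro γ hγ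
    simp only [Finset.mem_image] at hγ
    obtain ⟨b, hb, rfl⟩ := hγ
    obtain ⟨⟨p, hp, hpre, hl⟩, _⟩ := hr b hb
    have := hpre.length_le
    simp at this
    omega
  · intro f hf hinf
    obtain ⟨i, a, ρ, ha, hmax, hocc, h1, h2⟩ := main_ind h0 hclos n f hf (hv ▸ hinf)
    have ha' : a ∈ v.toFinset := List.mem_toFinset.mpr (hv ▸ ha)
    have hra : MaxPalSA v a (r a) := ⟨(hr a ha').1, (hr a ha').2⟩
    have hρr : ρ = r a := maxPalSA_unique (hv ▸ hmax) hra
    exact ⟨i, hv ▸ hocc, r a, Finset.mem_image_of_mem r ha', by omega, by omega⟩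
  · intro Γ hΓ
    have key : ∀ b : Bool, ∃ γ, b ∈ v.toFinset → γ ∈ Γ ∧ (v.drop γ).take 1 = [b] := by
      intro b
      by_cases hb : b ∈ v.toFinset
      swap
      · exact ⟨0, fun h => absurd h hb⟩
      refine ?_
      suffices h : ∃ γ, γ ∈ Γ ∧ (v.drop γ).take 1 = [b] by
        obtain ⟨γ, h1, h2⟩ := h
        exact ⟨γ, fun _ => ⟨h1, h2⟩⟩
      have hbmem := List.mem_toFinset.mp hb
      obtain ⟨s, t, hst⟩ := List.append_of_mem hbmem
      have hinf : [b] <:+: v := ⟨s, t, by rw [hst]; simp⟩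
      obtain ⟨i, hocc, γ, hγΓ, hiγ, hγi⟩ := hΓ.2 [b] (by simp) hinf
      have hγeq : γ = i := by simp at hγi; omega
      refine ⟨γ, hγΓ, ?_⟩
      rw [hγeq]
      simpa using hocc.2
    choose g hg using key
    rw [hcard]
    apply Finset.card_le_card_of_injOn g (fun b hb => (hg b hb).1)
    intro b1 hb1 b2 hb2 hEq
    have := ((hg b1 hb1).2).symm.trans (hEq ▸ (hg b2 hb2).2)
    simpa using this
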